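/- If a graph G with at least two vertices has a set-sequential labeling in F_2^n, then the sum of the labels of the vertices of even degree is the zero vector. -/

import Mathlib

lemma zmod2_add_eq_zero_iff (x y : ZMod 2) : x + y = 0 ↔ x = y := by revert x y; decide

lemma pi_add_self (n : ℕ) (x : Fin n → ZMod 2) : x + x = 0 := by
  funext i
  exact (zmod2_add_eq_zero_iff _ _).2 rfl

/-- The sum of all vectors of `F_2^n` is zero when `n ≥ 2`. -/
lemma sum_univ_vectors_eq_zero (n : ℕ) (hn : 2 ≤ n) :
    ∑ x : Fin n → ZMod 2, x = 0 := by
  funext i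
  rw [Finset.sum_apply]
  have key : ∑ x : Fin n → ZMod 2, x i
      = ∑ p : ZMod 2 × ({ j : Fin n // j ≠ i } → ZMod 2), p.1 :=
    Fintype.sum_equiv (Equiv.funSplitAt i (ZMod 2)) _ _ (fun x => rfl)
  rw [Pi.zero_apply, key, Fintype.sum_prod_type]
  have hcard : Even (Fintype.card ({ j : Fin n // j ≠ i } → ZMod 2)) := by
    rw [Fintype.card_fun]
    have : Nonempty { j : Fin n // j ≠ i } := by
      obtain ⟨j, hj⟩ := Fintype.exists_ne_of_one_lt_card
        (by rw [Fintype.card_fin]; omega : 1 < Fintype.card (Fin n)) i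
      exact ⟨⟨j, hj⟩⟩
    have hpos : 0 < Fintype.card { j : Fin n // j ≠ i } := Fintype.card_pos
    rcases Nat.exists_eq_succ_of_ne_zero hpos.ne' with ⟨k, hk⟩
    rw [hk, ZMod.card 2, pow_succ]
    exact even_two.mul_left _
  simp only [Finset.sum_const, Finset.card_univ]
  rw [← Finset.smul_sum]
  have h1 : ∑ a : ZMod 2, a = 1 := by decide
  rw [h1, nsmul_eq_mul, mul_one]
  exact (ZMod.natCast_eq_zero_iff _ 2).2 hcard.two_dvd

/-- If a graph `G` with at least two vertices has a set-sequential labeling in `F_2^n`,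
then the sum of the labels of the vertices of even degree is zero. -/
theorem sum_even_degree_labels_eq_zero {V : Type*} [Fintype V] [DecidableEq V]
    (G : SimpleGraph V) [DecidableRel G.Adj] (n : ℕ)
    (hV : 2 ≤ Fintype.card V)
    (ℓ : V → (Fin n → ZMod 2))
    (hinj : Function.Injective ℓ) (hnz : ∀ v, ℓ v ≠ 0)
    (hbij : ∀ x : Fin n → ZMod 2, x ≠ 0 →
      ∃! s : V ⊕ G.edgeFinset,
        Sum.elim ℓ
          (fun e => Sym2.lift ⟨fun a b => ℓ a + ℓ b, fun a b => add_comm _ _⟩ (e : Sym2 V)) s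
          = x) :
    ∑ v ∈ Finset.univ.filter (fun v => Even (G.degree v)), ℓ v = 0 := by
  classical
  set F : V ⊕ G.edgeFinset → (Fin n → ZMod 2) := Sum.elim ℓ
    (fun e => Sym2.lift ⟨fun a b => ℓ a + ℓ b, fun a b => add_comm _ _⟩ (e : Sym2 V)) with hF
  -- every label is nonzero
  have hFnz : ∀ s, F s ≠ 0 := by
    rintro (v | ⟨e, he⟩)
    · exact hnz v
    · rw [SimpleGraph.mem_edgeFinset] at he
      induction e using Sym2.ind with
      | _ a b =>
        simp only [hF, Sum.elim_inr, Sym2.lift_mk]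
        intro h
        have hab : ℓ a = ℓ b := by
          funext i
          exact (zmod2_add_eq_zero_iff _ _).1 (congrFun h i)
        exact (G.ne_of_adj he) (hinj hab)
  -- n is at least 2
  have hn : 2 ≤ n := by
    by_contra hcon
    push_neg at hcon
    have hcardV : Fintype.card V ≤ Fintype.card {x : Fin n → ZMod 2 // x ≠ 0} :=
      Fintype.card_le_of_injective (fun v => ⟨ℓ v, hnz v⟩)
        (fun a b hab => hinj (congrArg Subtype.val hab))
    have h1 : Fintype.card {x : Fin n → ZMod 2 // x ≠ 0} ≤ 2 ^ n - 1 := by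
      have := Fintype.card_subtype_le (α := Fin n → ZMod 2) (fun x => x ≠ 0)
      have h2 : Fintype.card {x : Fin n → ZMod 2 // x ≠ 0}
          = Fintype.card (Fin n → ZMod 2) - Fintype.card {x : Fin n → ZMod 2 // x = 0} := by
        rw [Fintype.card_subtype_compl (fun x => x = 0)]
      rw [h2, Fintype.card_fun, ZMod.card, Fintype.card_fin, Fintype.card_subtype_eq]
    have h3 : 2 ^ n - 1 ≤ 1 := by
      interval_cases n <;> simp
    omega
  -- restate the bijection hypothesis in terms of F
  have hbij' : ∀ x : Fin n → ZMod 2, x ≠ 0 → ∃! s : V ⊕ G.edgeFinset, F s = x := by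
    intro x hx
    obtain ⟨s, hs, hu⟩ := hbij x hx
    refine ⟨s, ?_, fun t ht => hu t ?_⟩
    · rw [← hs]; cases s <;> rfl
    · rw [← ht]; cases t <;> rfl
  -- the labels sum over everything to the sum of all nonzero vectors, which is 0
  have hsum0 : ∑ s : V ⊕ G.edgeFinset, F s = 0 := by
    have hb : ∑ s : V ⊕ G.edgeFinset, F s
        = ∑ x ∈ Finset.univ.filter (fun x : Fin n → ZMod 2 => x ≠ 0), x := by
      refine Finset.sum_bij (fun s _ => F s) ?_ ?_ ?_ ?_
      · intro s _
        simp [hFnz s]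
      · intro s _ t _ hst
        obtain ⟨u, _, hu⟩ := hbij' (F s) (hFnz s)
        rw [hu s rfl, hu t hst.symm]
      · intro x hx
        rw [Finset.mem_filter] at hx
        obtain ⟨s, hs, _⟩ := hbij' x hx.2
        exact ⟨s, Finset.mem_univ s, hs⟩
      · intro s _
        rfl
    rw [hb]
    have := sum_univ_vectors_eq_zero n hn
    rw [← Finset.sum_filter_add_sum_filter_not Finset.univ
      (fun x : Fin n → ZMod 2 => x ≠ 0) (fun x => x)] at this
    have h0 : ∑ x ∈ Finset.univ.filter (fun x : Fin n → ZMod 2 => ¬x ≠ 0), x = 0 := by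
      apply Finset.sum_eq_zero
      intro x hx
      rw [Finset.mem_filter] at hx
      simpa using hx.2
    rw [h0, add_zero] at this
    exact this
  -- split the sum into vertices and edges
  rw [Fintype.sum_sum_type] at hsum0
  simp only [hF, Sum.elim_inl, Sum.elim_inr] at hsum0
  -- the edge part via darts
  have hedge : ∑ e : G.edgeFinset,
      Sym2.lift ⟨fun a b => ℓ a + ℓ b, fun a b => add_comm _ _⟩ (e : Sym2 V)
      = ∑ v, G.degree v • ℓ v := by
    have hd1 : ∑ d : G.Dart, ℓ d.fst
        = ∑ e ∈ G.edgeFinset,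
          Sym2.lift ⟨fun a b => ℓ a + ℓ b, fun a b => add_comm _ _⟩ e := by
      rw [← Finset.sum_fiberwise_of_maps_to
        (g := SimpleGraph.Dart.edge) (t := G.edgeFinset)
        (fun d _ => by rw [SimpleGraph.mem_edgeFinset]; exact d.edge_mem)]
      refine Finset.sum_congr rfl ?_
      intro e he
      rw [SimpleGraph.mem_edgeFinset] at he
      induction e using Sym2.ind with
      | _ a b =>
        have d : G.Dart := ⟨(a, b), he⟩
        have hfib : Finset.univ.filter (fun d' : G.Dart => d'.edge = s(a, b))
            = {(⟨(a, b), he⟩ : G.Dart), (⟨(a, b), he⟩ : G.Dart).symm} := by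
          have := SimpleGraph.Dart.edge_fiber (⟨(a, b), he⟩ : G.Dart)
          convert this using 2
          exact Iff.rfl
        rw [hfib, Finset.sum_pair (SimpleGraph.Dart.symm_ne _).symm]
        simp [SimpleGraph.Dart.symm]
    have hd2 : ∑ d : G.Dart, ℓ d.fst = ∑ v, G.degree v • ℓ v := by
      rw [← Finset.sum_fiberwise_of_maps_to
        (g := fun d : G.Dart => d.fst) (t := Finset.univ)
        (fun d _ => Finset.mem_univ _)]
      refine Finset.sum_congr rfl ?_
      intro v _
      have h1 : ∀ d ∈ Finset.univ.filter (fun d : G.Dart => d.fst = v), ℓ d.fst = ℓ v :=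
        fun d hd => by rw [(Finset.mem_filter.1 hd).2]
      rw [Finset.sum_congr rfl h1, Finset.sum_const,
        SimpleGraph.dart_fst_fiber_card_eq_degree]
    rw [Finset.sum_coe_sort G.edgeFinset, ← hd1, hd2]
  rw [hedge, ← Finset.sum_add_distrib] at hsum0
  -- reduce mod 2
  have hkey : ∀ v, ℓ v + G.degree v • ℓ v
      = if Even (G.degree v) then ℓ v else 0 := by
    intro v
    rcases Nat.even_or_odd (G.degree v) with h | h
    · obtain ⟨m, hm⟩ := h
      rw [if_pos ⟨m, hm⟩, hm, add_nsmul, pi_add_self n (m • ℓ v), add_zero]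
    · rw [if_neg (Nat.not_even_iff_odd.2 h)]
      obtain ⟨m, hm⟩ := h
      have hm' : G.degree v = m + m + 1 := by omega
      rw [hm', add_nsmul, add_nsmul, one_nsmul, pi_add_self n (m • ℓ v), zero_add]
      exact pi_add_self n (ℓ v)
  rw [Finset.sum_congr rfl (fun v _ => hkey v)] at hsum0
  rw [← Finset.sum_filter] at hsum0
  exact hsum0
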